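/- Let ρ > 0 and let F : ℂ → ℂ be holomorphic on the punctured disk U = {z ∈ ℂ : 0 < |z| < ρ} and integrable on U with respect to the Lebesgue (volume) measure on ℂ ≅ ℝ². Then there exists a function Φ : ℂ → ℂ holomorphic on the full disk {z ∈ ℂ : |z| < ρ} such that Φ(z) = z·F(z) for every z ∈ U. Equivalently, the Laurent expansion of F at 0 has the form F(z) = c/z + F_H(z) with c ∈ ℂ and F_H holomorphic on the disk. -/

import Mathlib

open MeasureTheory Set Filter Metric Real

open scoped Topology

/-- Mean value bound on a circle: `2π‖F z₀‖` is at most the integral of `‖F‖` over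
a circle centered at `z₀` contained (with its disk) in the open set where `F` is holomorphic. -/
lemma circle_mean_bound {U : Set ℂ} {F : ℂ → ℂ}
    (hF : ∀ z ∈ U, DifferentiableAt ℂ F z) {z0 : ℂ} {r : ℝ} (hr : 0 < r)
    (hsub : Metric.closedBall z0 r ⊆ U) :
    2 * π * ‖F z0‖ ≤ ∫ θ in (0:ℝ)..(2*π), ‖F (circleMap z0 r θ)‖ := by
  have h1 : DifferentiableOn ℂ F (Metric.closedBall z0 r) := fun z hz =>
    (hF z (hsub hz)).differentiableWithinAt
  have hd : DiffContOnCl ℂ F (Metric.ball z0 r) :=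
    ⟨h1.mono Metric.ball_subset_closedBall, by
      rw [closure_ball z0 hr.ne']; exact h1.continuousOn⟩
  have hint := hd.circleIntegral_sub_inv_smul (Metric.mem_ball_self hr)
  have hnorm : ‖(2 * (π:ℂ) * Complex.I) • F z0‖ = 2 * π * ‖F z0‖ := by
    rw [norm_smul]
    congr 1
    simp [_root_.abs_of_nonneg Real.pi_nonneg]
  calc 2 * π * ‖F z0‖ = ‖∮ w in C(z0, r), (w - z0)⁻¹ • F w‖ := by rw [hint, hnorm]
    _ ≤ ∫ θ in (0:ℝ)..(2*π), ‖deriv (circleMap z0 r) θ •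
        ((circleMap z0 r θ - z0)⁻¹ • F (circleMap z0 r θ))‖ := by
        rw [circleIntegral]
        exact intervalIntegral.norm_integral_le_integral_norm (by positivity)
    _ = ∫ θ in (0:ℝ)..(2*π), ‖F (circleMap z0 r θ)‖ := by
        apply intervalIntegral.integral_congr
        intro θ _
        show ‖deriv (circleMap z0 r) θ • ((circleMap z0 r θ - z0)⁻¹ • F (circleMap z0 r θ))‖
          = ‖F (circleMap z0 r θ)‖
        rw [norm_smul, norm_smul, deriv_circleMap, circleMap_sub_center]
        have h2 : ‖circleMap 0 r θ * Complex.I‖ = r := by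
          simp [_root_.abs_of_pos hr]
        have h3 : ‖(circleMap 0 r θ)⁻¹‖ = r⁻¹ := by
          simp [_root_.abs_of_pos hr]
        rw [h2, h3, ← mul_assoc, mul_inv_cancel₀ hr.ne', one_mul]

/-- Polar coordinates computation: the integral of `r ‖F (circleMap z₀ r θ)‖` over
`r ∈ [a,b]`, `θ ∈ (-π,π)` equals the integral of `‖F‖` over the closed annulus. -/
lemma annulus_polar {F : ℂ → ℂ} (z0 : ℂ) {a b : ℝ} (ha : 0 < a) (hab : a ≤ b)
    (hcont : ContinuousOn F (Metric.closedBall z0 b \ Metric.ball z0 a)) :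
    IntervalIntegrable (fun r => ∫ θ in Set.Ioo (-π) π, r * ‖F (circleMap z0 r θ)‖)
      volume a b ∧
    ∫ r in a..b, (∫ θ in Set.Ioo (-π) π, r * ‖F (circleMap z0 r θ)‖)
      = ∫ w in Metric.closedBall z0 b \ Metric.ball z0 a, ‖F w‖ := by
  set A := Metric.closedBall z0 b \ Metric.ball z0 a with hA
  have hAm : MeasurableSet A := measurableSet_closedBall.diff measurableSet_ball
  set H : ℝ × ℝ → ℝ := fun p => p.1 * ‖F (circleMap z0 p.1 p.2)‖ with hH
  have hdist : ∀ p : ℝ × ℝ, 0 ≤ p.1 → dist (circleMap z0 p.1 p.2) z0 = p.1 := by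
    intro p hp
    have := circleMap_mem_sphere z0 hp p.2
    rwa [Metric.mem_sphere] at this
  have hmemA_iff : ∀ p : ℝ × ℝ, 0 ≤ p.1 →
      (circleMap z0 p.1 p.2 ∈ A ↔ a ≤ p.1 ∧ p.1 ≤ b) := by
    intro p hp
    have hd := hdist p hp
    simp only [hA, Set.mem_diff, Metric.mem_closedBall, Metric.mem_ball, hd, not_lt]
    tauto
  -- continuity / integrability of H on the rectangle
  have hcm : Continuous fun p : ℝ × ℝ => circleMap z0 p.1 p.2 := by
    unfold circleMap
    fun_prop
  have hHc : ContinuousOn H (Set.Icc a b ×ˢ Set.Icc (-π) π) := by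
    apply ContinuousOn.mul continuous_fst.continuousOn
    apply ContinuousOn.norm
    apply hcont.comp hcm.continuousOn
    intro p hp
    exact (hmemA_iff p (ha.le.trans hp.1.1)).2 ⟨hp.1.1, hp.1.2⟩
  have hKint : IntegrableOn H (Set.Icc a b ×ˢ Set.Icc (-π) π) :=
    hHc.integrableOn_compact (isCompact_Icc.prod isCompact_Icc)
  have hint2 : IntegrableOn H (Set.Icc a b ×ˢ Set.Ioo (-π) π) :=
    hKint.mono_set (Set.prod_mono_right Set.Ioo_subset_Icc_self)
  -- relating `polarCoord.symm` to `circleMap`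
  have hσ : ∀ p : ℝ × ℝ, z0 + Complex.polarCoord.symm p = circleMap z0 p.1 p.2 := by
    intro p
    rw [Complex.polarCoord_symm_apply, circleMap, Complex.exp_mul_I]
    push_cast
    ring
  -- the polar coordinates identity
  have key := Complex.integral_comp_polarCoord_symm
    (fun w => A.indicator (fun w => ‖F w‖) (z0 + w))
  have hRHS : (∫ w : ℂ, A.indicator (fun w => ‖F w‖) (z0 + w)) = ∫ w in A, ‖F w‖ := by
    rw [integral_add_left_eq_self, integral_indicator hAm]
  have htarget : polarCoord.target = Set.Ioi (0:ℝ) ×ˢ Set.Ioo (-π) π := rfl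
  have hLHS : (∫ p in polarCoord.target,
      p.1 • (A.indicator (fun w => ‖F w‖) (z0 + Complex.polarCoord.symm p)))
      = ∫ p in Set.Icc a b ×ˢ Set.Ioo (-π) π, H p := by
    rw [setIntegral_congr_fun polarCoord.open_target.measurableSet
      (g := (Set.Icc a b ×ˢ (Set.univ : Set ℝ)).indicator H) ?_]
    · rw [setIntegral_indicator (measurableSet_Icc.prod MeasurableSet.univ)]
      congr 1
      rw [htarget, Set.prod_inter_prod, Set.inter_univ,
        Set.inter_eq_right.mpr (fun x hx => Set.mem_Ioi.mpr (lt_of_lt_of_le ha hx.1))]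
    · intro p hp
      rw [htarget] at hp
      have hp1 : 0 < p.1 := hp.1
      show p.1 • A.indicator (fun w => ‖F w‖) (z0 + Complex.polarCoord.symm p)
          = (Set.Icc a b ×ˢ (Set.univ : Set ℝ)).indicator H p
      rw [hσ p, smul_eq_mul]
      by_cases hmem : a ≤ p.1 ∧ p.1 ≤ b
      · rw [Set.indicator_of_mem ((hmemA_iff p hp1.le).2 hmem),
          Set.indicator_of_mem (by exact ⟨⟨hmem.1, hmem.2⟩, Set.mem_univ _⟩)]
      · rw [Set.indicator_of_notMem (fun h => hmem ((hmemA_iff p hp1.le).1 h)),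
          Set.indicator_of_notMem (by
            intro h
            exact hmem ⟨h.1.1, h.1.2⟩), mul_zero]
  -- Fubini
  have hprod : ∫ p in Set.Icc a b ×ˢ Set.Ioo (-π) π, H p
      = ∫ r in Set.Icc a b, ∫ θ in Set.Ioo (-π) π, H (r, θ) := by
    rw [Measure.volume_eq_prod] at hint2 ⊢
    exact setIntegral_prod H hint2
  have hinner : IntegrableOn (fun r => ∫ θ in Set.Ioo (-π) π, H (r, θ)) (Set.Icc a b) := by
    have h := hint2
    rw [IntegrableOn, Measure.volume_eq_prod, ← Measure.prod_restrict] at h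
    exact h.integral_prod_left
  constructor
  · apply IntegrableOn.intervalIntegrable
    rw [Set.uIcc_of_le hab]
    exact hinner
  · calc ∫ r in a..b, (∫ θ in Set.Ioo (-π) π, r * ‖F (circleMap z0 r θ)‖)
        = ∫ r in Set.Ioc a b, ∫ θ in Set.Ioo (-π) π, H (r, θ) :=
          intervalIntegral.integral_of_le hab
      _ = ∫ r in Set.Icc a b, ∫ θ in Set.Ioo (-π) π, H (r, θ) :=
          (integral_Icc_eq_integral_Ioc).symm
      _ = ∫ p in Set.Icc a b ×ˢ Set.Ioo (-π) π, H p := hprod.symm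
      _ = ∫ p in polarCoord.target,
            p.1 • (A.indicator (fun w => ‖F w‖) (z0 + Complex.polarCoord.symm p)) := hLHS.symm
      _ = ∫ w : ℂ, A.indicator (fun w => ‖F w‖) (z0 + w) := key
      _ = ∫ w in A, ‖F w‖ := hRHS

/-- A function holomorphic on a punctured disk and integrable there (with respect to planar
Lebesgue measure) has at most a simple pole at the puncture: `z·F(z)` extends to a function
`Φ` holomorphic on the whole disk. -/
theorem holomorphic_extension_of_integrable_on_punctured_disk
    (ρ : ℝ) (hρ : 0 < ρ)
    (U : Set ℂ) (hU : U = {z : ℂ | 0 < ‖z‖ ∧ ‖z‖ < ρ})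
    (F : ℂ → ℂ)
    (hF : ∀ z ∈ U, DifferentiableAt ℂ F z)
    (hFi : IntegrableOn F U volume) :
    ∃ Φ : ℂ → ℂ, (∀ z ∈ Metric.ball (0 : ℂ) ρ, DifferentiableAt ℂ Φ z) ∧
      ∀ z ∈ U, Φ z = z * F z := by
  have hU' : U = Metric.ball 0 ρ \ {0} := by
    rw [hU]
    ext z
    simp only [Set.mem_setOf_eq, Set.mem_diff, Metric.mem_ball, Complex.dist_eq, sub_zero,
      Set.mem_singleton_iff, norm_pos_iff]
    tauto
  have hUo : IsOpen U := by
    rw [hU']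
    exact Metric.isOpen_ball.sdiff isClosed_singleton
  have hFc : ContinuousOn F U := fun z hz => (hF z hz).continuousAt.continuousWithinAt
  have hFin : IntegrableOn (fun w => ‖F w‖) U volume := hFi.norm
  -- membership of points of small closed balls in U
  have hballU : ∀ z : ℂ, z ≠ 0 → 3/2 * ‖z‖ < ρ →
      Metric.closedBall z (‖z‖ / 2) ⊆ U := by
    intro z hz hzρ w hw
    rw [Metric.mem_closedBall, Complex.dist_eq] at hw
    rw [hU]
    have h1 : ‖z‖ - ‖w‖ ≤ ‖z - w‖ := by
      exact norm_sub_norm_le z w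
    have h2 : ‖z - w‖ = ‖w - z‖ := by
      exact norm_sub_rev z w
    have h3 : ‖w‖ ≤ ‖z‖ + ‖w - z‖ := by
      calc ‖w‖ = ‖z + (w - z)‖ := by ring_nf
        _ ≤ ‖z‖ + ‖w - z‖ := norm_add_le _ _
    have hz0 : 0 < ‖z‖ := norm_pos_iff.mpr hz
    constructor
    · rw [h2] at h1
      have : 0 < ‖z‖ / 2 := by positivity
      nlinarith [norm_nonneg w]
    · nlinarith
  -- the main pointwise estimate
  have hmain : ∀ z : ℂ, z ≠ 0 → 3/2 * ‖z‖ < ρ →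
      π/8 * ‖z‖ ^ 2 * ‖F z‖ ≤
        ∫ w in Metric.closedBall z (‖z‖ / 2) \
            Metric.ball z (‖z‖ / 4), ‖F w‖ := by
    intro z hz hzρ
    have hR0 : 0 < ‖z‖ := norm_pos_iff.mpr hz
    set R := ‖z‖ with hRdef
    have ha : (0:ℝ) < R/4 := by positivity
    have hab : R/4 ≤ R/2 := by linarith
    have hAsub : Metric.closedBall z (R/2) ⊆ U := hballU z hz hzρ
    have hcontA : ContinuousOn F (Metric.closedBall z (R/2) \ Metric.ball z (R/4)) :=
      hFc.mono (Set.diff_subset.trans hAsub)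
    obtain ⟨hII, hEq⟩ := annulus_polar z ha hab hcontA
    have hptwise : ∀ r ∈ Set.Icc (R/4) (R/2),
        2*π*(R/4)*‖F z‖ ≤ ∫ θ in Set.Ioo (-π) π, r * ‖F (circleMap z r θ)‖ := by
      intro r hr
      have h0r : (0:ℝ) < r := lt_of_lt_of_le ha hr.1
      have hcb : 2*π*‖F z‖ ≤ ∫ θ in (0:ℝ)..(2*π), ‖F (circleMap z r θ)‖ :=
        circle_mean_bound hF h0r ((Metric.closedBall_subset_closedBall hr.2).trans hAsub)
      have hper : Function.Periodic (fun θ => ‖F (circleMap z r θ)‖) (2*π) := by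
        intro θ
        simp [periodic_circleMap z r θ]
      have heq2 : ∫ θ in Set.Ioo (-π) π, r * ‖F (circleMap z r θ)‖
          = r * ∫ θ in (0:ℝ)..(2*π), ‖F (circleMap z r θ)‖ := by
        rw [← integral_Ioc_eq_integral_Ioo,
          ← intervalIntegral.integral_of_le (by linarith [pi_pos] : -π ≤ π),
          intervalIntegral.integral_const_mul]
        congr 1
        have := hper.intervalIntegral_add_eq (-π) 0
        simpa [zero_add, (by ring : -π + 2*π = π)] using this
      rw [heq2]
      have hpos : 0 ≤ ∫ θ in (0:ℝ)..(2*π), ‖F (circleMap z r θ)‖ :=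
        intervalIntegral.integral_nonneg (by positivity) (fun _ _ => norm_nonneg _)
      calc 2*π*(R/4)*‖F z‖ = (R/4) * (2*π*‖F z‖) := by ring
        _ ≤ (R/4) * ∫ θ in (0:ℝ)..(2*π), ‖F (circleMap z r θ)‖ :=
            mul_le_mul_of_nonneg_left hcb ha.le
        _ ≤ r * ∫ θ in (0:ℝ)..(2*π), ‖F (circleMap z r θ)‖ :=
            mul_le_mul_of_nonneg_right hr.1 hpos
    have hmono := intervalIntegral.integral_mono_on hab
      (intervalIntegrable_const (c := 2*π*(R/4)*‖F z‖)) hII hptwise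
    rw [intervalIntegral.integral_const, hEq] at hmono
    calc π/8 * R^2 * ‖F z‖ = (R/2 - R/4) • (2*π*(R/4)*‖F z‖) := by
          rw [smul_eq_mul]; ring
      _ ≤ _ := hmono
  -- smallness of the integral near 0
  have hGsmall : ∀ ε > (0:ℝ), ∃ n : ℕ,
      (∫ w in U ∩ Metric.closedBall 0 (1/(n+1)), ‖F w‖) < ε := by
    have hm : ∀ n : ℕ, MeasurableSet (U ∩ Metric.closedBall 0 (1/(n+1))) := fun n =>
      hUo.measurableSet.inter measurableSet_closedBall
    have hanti : Antitone (fun n : ℕ => U ∩ Metric.closedBall 0 (1/(n+1))) := by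
      intro m n hmn
      apply Set.inter_subset_inter_right
      apply Metric.closedBall_subset_closedBall
      have : (m:ℝ) + 1 ≤ (n:ℝ) + 1 := by exact_mod_cast Nat.succ_le_succ hmn
      exact one_div_le_one_div_of_le (by positivity) this
    have hiInter : ⋂ n : ℕ, (U ∩ Metric.closedBall 0 (1/(n+1))) = ∅ := by
      ext w
      simp only [Set.mem_iInter, Set.mem_inter_iff, Set.mem_empty_iff_false, iff_false, not_forall]
      by_contra h
      push_neg at h
      have hw0 : w ≠ 0 := by
        have := (h 0).1
        rw [hU'] at this
        exact this.2
      have hle : ‖w‖ ≤ 0 := by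
        apply ge_of_tendsto' tendsto_one_div_add_atTop_nhds_zero_nat
        intro n
        have := (h n).2
        rwa [Metric.mem_closedBall, dist_zero_right] at this
      exact hw0 (norm_le_zero_iff.mp hle)
    have hten := tendsto_setIntegral_of_antitone hm hanti
      ⟨0, hFin.mono_set Set.inter_subset_left⟩
    rw [hiInter] at hten
    simp only [Measure.restrict_empty, integral_zero_measure] at hten
    intro ε hε
    exact (hten.eventually (eventually_lt_nhds hε)).exists
  -- the key limit: z² F z → 0
  have hten : Tendsto (fun z : ℂ => z^2 * F z) (𝓝[≠] (0:ℂ)) (𝓝 0) := by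
    rw [Metric.tendsto_nhdsWithin_nhds]
    intro ε hε
    obtain ⟨n, hn⟩ := hGsmall (π/8 * ε) (by positivity)
    refine ⟨min ((2/3) * (1/(n+1))) (2/3 * ρ), by positivity, ?_⟩
    intro z hz hdz
    have hz0 : z ≠ 0 := hz
    rw [dist_zero_right] at hdz
    have hzn : ‖z‖ < (2/3) * (1/(n+1)) := lt_of_lt_of_le hdz (min_le_left _ _)
    have hzρ' : ‖z‖ < 2/3 * ρ := lt_of_lt_of_le hdz (min_le_right _ _)
    have habs : ‖z‖ = ‖z‖ := rfl
    have h32 : 3/2 * ‖z‖ < ρ := by rw [habs]; linarith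
    have hm := hmain z hz0 h32
    have hsub2 : Metric.closedBall z (‖z‖ / 2) \ Metric.ball z (‖z‖ / 4)
        ⊆ U ∩ Metric.closedBall 0 (1/(n+1)) := by
      intro w hw
      have hwU : w ∈ U := hballU z hz0 h32 hw.1
      refine ⟨hwU, ?_⟩
      rw [Metric.mem_closedBall, dist_zero_right]
      have hw1 : ‖w - z‖ ≤ ‖z‖ / 2 := by
        have := hw.1
        rwa [Metric.mem_closedBall, Complex.dist_eq] at this
      have : ‖w‖ ≤ ‖z‖ + ‖w - z‖ := by
        calc ‖w‖ = ‖z + (w - z)‖ := by ring_nf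
          _ ≤ ‖z‖ + ‖w - z‖ := norm_add_le _ _
      have hnw : ‖w‖ = ‖w‖ := rfl
      rw [hnw, habs] at *
      linarith
    have hmono2 : (∫ w in Metric.closedBall z (‖z‖ / 2) \
          Metric.ball z (‖z‖ / 4), ‖F w‖)
        ≤ ∫ w in U ∩ Metric.closedBall 0 (1/(n+1)), ‖F w‖ := by
      apply setIntegral_mono_set (hFin.mono_set Set.inter_subset_left)
      · exact Filter.Eventually.of_forall (fun w => norm_nonneg _)
      · exact Filter.Eventually.of_forall hsub2
    have hfinal : π/8 * ‖z‖ ^ 2 * ‖F z‖ < π/8 * ε :=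
      lt_of_le_of_lt (hm.trans hmono2) hn
    rw [dist_zero_right]
    have : ‖z^2 * F z‖ = ‖z‖ ^ 2 * ‖F z‖ := by
      rw [norm_mul, norm_pow, habs]
    rw [this]
    have hπ : (0:ℝ) < π/8 := by positivity
    calc ‖z‖ ^ 2 * ‖F z‖
        = (π/8)⁻¹ * (π/8 * ‖z‖ ^ 2 * ‖F z‖) := by
          rw [← mul_assoc, ← mul_assoc, inv_mul_cancel₀ hπ.ne', one_mul]
      _ < (π/8)⁻¹ * (π/8 * ε) := mul_lt_mul_of_pos_left hfinal (by positivity)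
      _ = ε := by rw [← mul_assoc, inv_mul_cancel₀ hπ.ne', one_mul]
  -- removable singularity for z * F z
  set f : ℂ → ℂ := fun z => z * F z with hf
  have hball : Metric.ball (0:ℂ) ρ ∈ 𝓝 (0:ℂ) := Metric.ball_mem_nhds 0 hρ
  have hd : DifferentiableOn ℂ f (Metric.ball (0:ℂ) ρ \ {0}) := by
    intro w hw
    rw [← hU'] at hw
    exact (differentiableAt_id.mul (hF w hw)).differentiableWithinAt
  have ho : (fun z => f z - f 0) =o[𝓝[≠] (0:ℂ)] fun z => (z - 0)⁻¹ := by
    have hf0 : f 0 = 0 := by simp [hf]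
    rw [Asymptotics.isLittleO_iff]
    intro c hc
    have h1 : ∀ᶠ z in 𝓝[≠] (0:ℂ), ‖z^2 * F z‖ ≤ c := by
      have := hten (Metric.closedBall_mem_nhds (0:ℂ) hc)
      filter_upwards [this] with z hz
      rw [Set.mem_preimage, Metric.mem_closedBall, dist_zero_right] at hz
      exact hz
    filter_upwards [h1, self_mem_nhdsWithin] with z h1z h2z
    have hz0 : z ≠ 0 := h2z
    have hzn : ‖z‖ ≠ 0 := norm_ne_zero_iff.mpr hz0
    rw [hf0, sub_zero, sub_zero, norm_inv]
    have heq : ‖f z‖ = ‖z^2 * F z‖ * ‖z‖⁻¹ := by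
      have h2 : ‖z ^ 2 * F z‖ * ‖z‖⁻¹ = ‖z‖ * ‖F z‖ * (‖z‖ * ‖z‖⁻¹) := by
        rw [norm_mul, norm_pow]; ring
      rw [h2, mul_inv_cancel₀ hzn, mul_one]
      simp [hf, norm_mul]
    rw [heq]
    exact mul_le_mul_of_nonneg_right h1z (by positivity)
  have hDiff := Complex.differentiableOn_update_limUnder_of_isLittleO hball hd ho
  refine ⟨Function.update f 0 (limUnder (𝓝[≠] (0:ℂ)) f),
    fun w hw => hDiff.differentiableAt (Metric.isOpen_ball.mem_nhds hw), ?_⟩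
  intro w hw
  have hw0 : w ≠ 0 := by
    rw [hU'] at hw
    exact hw.2
  rw [Function.update_of_ne hw0]
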